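/- arXiv:1605.02434 — 2 statements merged into one kernel-verified Lean document; each statement's English description precedes it below -/
import Mathlib

section
/- Let p be a prime, q a positive integer divisible by p, and l an integer. Define G̃ : ℂ → ℂ by G̃(s) := Σ_{(a,b)} e(a·l/q) · expZeta(b·p/q, s), the sum running over all pairs (a,b) with 1 ≤ a,b ≤ q and a·b ≡ 1 (mod q), where b·p/q is taken in ℝ/ℤ. Then: (i) for every s ∈ ℂ with Re s > 1, the series Σ_{n=1}^∞ Kl(l, n·p; q)/n^{s} converges absolutely and equals G̃(s); (ii) G̃ is complex differentiable at every point s ≠ 1. -/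
open Complex

/-- `e(z) = exp(2πiz)`. -/
noncomputable def eC (z : ℂ) : ℂ := Complex.exp (2 * Real.pi * Complex.I * z)

/-- The Kloosterman sum `Kl(m,n;c) = Σ_{x mod c, (x,c)=1} e((mx + nx*)/c)`,
where `x*` is the inverse of `x` modulo `c`. -/
noncomputable def Kl (m n : ℤ) (c : ℕ) : ℂ :=
  ∑ x ∈ Finset.filter (fun x => Nat.gcd x c = 1) (Finset.Icc 1 c),
    eC ((((m * x + n * ((((x : ZMod c))⁻¹.val : ℕ) : ℤ) : ℤ) : ℝ) / c : ℝ))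

/-- `G̃(s) = Σ_{1 ≤ a,b ≤ q, ab ≡ 1 (q)} e(al/q) expZeta(bp/q, s)`. -/
noncomputable def Gt (p q : ℕ) (l : ℤ) (s : ℂ) : ℂ :=
  ∑ a ∈ Finset.Icc 1 q, ∑ b ∈ Finset.Icc 1 q,
    if (a * b) % q = 1 % q then
      eC ((((a : ℤ) * l : ℤ) : ℝ) / q) *
        HurwitzZeta.expZeta ((((b * p : ℕ) : ℝ) / q : ℝ) : UnitAddCircle) s
    else 0

open HurwitzZeta

lemma norm_eC_real (r : ℝ) : ‖eC (r : ℂ)‖ = 1 := by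
  rw [eC, show (2 * (Real.pi:ℂ) * I * (r:ℂ)) = ((2 * Real.pi * r : ℝ) : ℂ) * I by
    push_cast; ring]
  exact Complex.norm_exp_ofReal_mul_I _

lemma hasSum_shift (a : ℝ) {s : ℂ} (hs : 1 < s.re) :
    HasSum (fun n : ℕ => Complex.exp (2 * Real.pi * I * a * (n + 1)) / (((n + 1 : ℕ) : ℂ)) ^ s)
      (expZeta (a : UnitAddCircle) s) := by
  have h := hasSum_expZeta_of_one_lt_re a hs
  set f : ℕ → ℂ := fun n => Complex.exp (2 * Real.pi * I * a * n) / ((n : ℂ)) ^ s with hf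
  have hs0 : s ≠ 0 := by intro h'; rw [h'] at hs; norm_num at hs
  have h0 : f 0 = 0 := by simp [hf, Complex.zero_cpow hs0]
  have h2 : HasSum (fun n : ℕ => f (n + 1)) (expZeta (a : UnitAddCircle) s) := by
    rw [hasSum_nat_add_iff 1]
    simpa [h0] using h
  exact h2.congr_fun (fun n => by simp only [hf]; push_cast; ring_nf)

lemma facts (q : ℕ) (hq1 : 1 < q) (x : ℕ) (hx : Nat.gcd x q = 1) :
    1 ≤ ((x : ZMod q))⁻¹.val ∧ ((x : ZMod q))⁻¹.val < q ∧
    (x * ((x : ZMod q))⁻¹.val) % q = 1 % q := by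
  haveI : Fact (1 < q) := ⟨hq1⟩
  have hu : IsUnit (x : ZMod q) := (ZMod.isUnit_iff_coprime x q).2 hx
  have hinv : (x : ZMod q) * (x : ZMod q)⁻¹ = 1 := ZMod.mul_inv_of_unit _ hu
  have hne : (x : ZMod q)⁻¹ ≠ 0 := by
    intro h; rw [h, mul_zero] at hinv; exact one_ne_zero hinv.symm
  refine ⟨Nat.one_le_iff_ne_zero.2 (fun h => hne (by rwa [← ZMod.val_eq_zero])), ZMod.val_lt _, ?_⟩
  rw [← Nat.ModEq, ← ZMod.natCast_eq_natCast_iff]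
  push_cast
  rw [ZMod.natCast_val, ZMod.cast_id, hinv]

lemma uniq (q : ℕ) (hq1 : 1 < q) (x b : ℕ) (hx : Nat.gcd x q = 1) (hb : b ∈ Finset.Icc 1 q)
    (h : (x * b) % q = 1 % q) : b = ((x : ZMod q))⁻¹.val := by
  haveI : Fact (1 < q) := ⟨hq1⟩
  have hu : IsUnit (x : ZMod q) := (ZMod.isUnit_iff_coprime x q).2 hx
  have h1 : ((x : ZMod q)) * (b : ZMod q) = 1 := by
    have : ((x * b : ℕ) : ZMod q) = ((1 : ℕ) : ZMod q) := (ZMod.natCast_eq_natCast_iff _ _ _).2 h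
    push_cast at this; exact this
  have hbe : (b : ZMod q) = (x : ZMod q)⁻¹ := by
    have hinv : (x : ZMod q) * (x : ZMod q)⁻¹ = 1 := ZMod.mul_inv_of_unit _ hu
    exact hu.mul_left_cancel (h1.trans hinv.symm)
  have hblt : b < q := by
    rcases Nat.lt_or_ge b q with h' | h'
    · exact h'
    · exfalso
      have hbq : b = q := le_antisymm (Finset.mem_Icc.1 hb).2 h'
      have hz : (b : ZMod q) = 0 := by rw [hbq]; exact ZMod.natCast_self q
      rw [hz, mul_zero] at h1; exact one_ne_zero h1.symm
  calc b = ((b : ZMod q)).val := (ZMod.val_cast_of_lt hblt).symm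
    _ = _ := by rw [hbe]

lemma noncop (q : ℕ) (hq1 : 1 < q) (a b : ℕ) (ha : ¬ Nat.gcd a q = 1)
    (h : (a * b) % q = 1 % q) : False := by
  haveI : Fact (1 < q) := ⟨hq1⟩
  have h1 : ((a : ZMod q)) * (b : ZMod q) = 1 := by
    have : ((a * b : ℕ) : ZMod q) = ((1 : ℕ) : ZMod q) := (ZMod.natCast_eq_natCast_iff _ _ _).2 h
    push_cast at this; exact this
  exact ha ((ZMod.isUnit_iff_coprime a q).1 (IsUnit.of_mul_eq_one _ h1))

lemma Gt_eq (p q : ℕ) (hq1 : 1 < q) (l : ℤ) (s : ℂ) :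
    Gt p q l s = ∑ x ∈ Finset.filter (fun x => Nat.gcd x q = 1) (Finset.Icc 1 q),
      eC ((((((x : ℤ) * l : ℤ) : ℝ) / (q : ℝ) : ℝ)) : ℂ) *
        expZeta ((((((x : ZMod q))⁻¹.val * p : ℕ) : ℝ) / (q : ℝ) : ℝ) : UnitAddCircle) s := by
  rw [Gt, Finset.sum_filter]
  refine Finset.sum_congr rfl (fun a ha => ?_)
  by_cases hcop : Nat.gcd a q = 1
  · rw [if_pos hcop]
    obtain ⟨h1, h2, h3⟩ := facts q hq1 a hcop
    rw [Finset.sum_eq_single_of_mem (((a : ZMod q))⁻¹.val) (Finset.mem_Icc.2 ⟨h1, h2.le⟩)]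
    · rw [if_pos h3]
      norm_cast
    · intro b hb hne
      rw [if_neg]
      intro hcon
      exact hne (uniq q hq1 a b hcop hb hcon)
  · rw [if_neg hcop]
    refine Finset.sum_eq_zero (fun b hb => ?_)
    rw [if_neg]
    intro hcon
    exact noncop q hq1 a b hcop hcon

set_option maxHeartbeats 1000000 in
theorem stmt7 (p q : ℕ) (hp : p.Prime) (hq : 0 < q) (hpq : p ∣ q) (l : ℤ) :
    (∀ s : ℂ, 1 < s.re →
      Summable (fun n : ℕ => ‖Kl l (((n : ℤ) + 1) * p) q / (((n : ℕ) + 1 : ℕ) : ℂ) ^ s‖) ∧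
      ∑' n : ℕ, Kl l (((n : ℤ) + 1) * p) q / (((n : ℕ) + 1 : ℕ) : ℂ) ^ s = Gt p q l s) ∧
    (∀ s : ℂ, s ≠ 1 → DifferentiableAt ℂ (Gt p q l) s) := by
  have hq1 : 1 < q := lt_of_lt_of_le hp.one_lt (Nat.le_of_dvd hq hpq)
  have hqR : (q : ℝ) ≠ 0 := by positivity
  have hqC : (q : ℂ) ≠ 0 := by exact_mod_cast Nat.cast_ne_zero.2 hq.ne'
  constructor
  · intro s hs
    set S := Finset.filter (fun x => Nat.gcd x q = 1) (Finset.Icc 1 q) with hS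
    -- pointwise decomposition of Kl
    have hKl : ∀ n : ℕ, Kl l (((n : ℤ) + 1) * p) q / (((n : ℕ) + 1 : ℕ) : ℂ) ^ s =
        ∑ x ∈ S, eC ((((((x : ℤ) * l : ℤ) : ℝ) / (q : ℝ) : ℝ)) : ℂ) *
          (Complex.exp (2 * Real.pi * I * ((((((x : ZMod q))⁻¹.val * p : ℕ) : ℝ) / (q : ℝ) : ℝ) : ℂ) * (n + 1)) /
            (((n + 1 : ℕ) : ℂ)) ^ s) := by
      intro n
      rw [Kl, ← hS, Finset.sum_div]
      refine Finset.sum_congr rfl (fun x hx => ?_)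
      rw [eC, eC, ← mul_div_assoc, ← Complex.exp_add]
      congr 2
      push_cast
      field_simp
    have key : ∀ x ∈ S, HasSum (fun n : ℕ =>
        eC ((((((x : ℤ) * l : ℤ) : ℝ) / (q : ℝ) : ℝ)) : ℂ) *
          (Complex.exp (2 * Real.pi * I * ((((((x : ZMod q))⁻¹.val * p : ℕ) : ℝ) / (q : ℝ) : ℝ) : ℂ) * (n + 1)) /
            (((n + 1 : ℕ) : ℂ)) ^ s))
        (eC ((((((x : ℤ) * l : ℤ) : ℝ) / (q : ℝ) : ℝ)) : ℂ) *
          expZeta ((((((x : ZMod q))⁻¹.val * p : ℕ) : ℝ) / (q : ℝ) : ℝ) : UnitAddCircle) s) :=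
      fun x _ => (hasSum_shift (((((x : ZMod q))⁻¹.val * p : ℕ) : ℝ) / (q : ℝ)) hs).mul_left _
    have htot := hasSum_sum key
    constructor
    · -- summability
      have hKlb : ∀ m : ℤ, ‖Kl l m q‖ ≤ (S.card : ℝ) := by
        intro m
        rw [Kl, ← hS]
        refine le_trans (norm_sum_le _ _) (le_of_eq ?_)
        calc ∑ x ∈ S, ‖eC (((((l * x + m * ((((x : ZMod q))⁻¹.val : ℕ) : ℤ) : ℤ)) : ℝ) / q : ℝ))‖
            = ∑ _x ∈ S, (1 : ℝ) := Finset.sum_congr rfl (fun x _ => norm_eC_real _)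
          _ = S.card := by simp
      have hb : Summable (fun n : ℕ => (S.card : ℝ) * (1 / (((n + 1 : ℕ) : ℝ)) ^ s.re)) := by
        apply Summable.mul_left
        have h1 : Summable (fun n : ℕ => 1 / ((n : ℝ)) ^ s.re) :=
          Real.summable_one_div_nat_rpow.2 hs
        exact ((summable_nat_add_iff 1).2 h1).congr (fun n => by push_cast; norm_num)
      refine Summable.of_nonneg_of_le (fun n => norm_nonneg _) (fun n => ?_) hb
      rw [norm_div]
      have hpos : (0:ℝ) < (((n + 1 : ℕ) : ℝ)) ^ s.re := by positivity
      rw [Complex.norm_natCast_cpow_of_pos (Nat.succ_pos n)]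
      rw [mul_one_div]
      exact (div_le_div_iff_of_pos_right hpos).2 (hKlb _)
    · -- tsum identity
      rw [tsum_congr hKl, htot.tsum_eq, Gt_eq p q hq1 l s, hS]
  · intro s hs
    have h : Gt p q l = fun s => ∑ x ∈ Finset.filter (fun x => Nat.gcd x q = 1) (Finset.Icc 1 q),
        eC ((((((x : ℤ) * l : ℤ) : ℝ) / (q : ℝ) : ℝ)) : ℂ) *
          expZeta ((((((x : ZMod q))⁻¹.val * p : ℕ) : ℝ) / (q : ℝ) : ℝ) : UnitAddCircle) s :=
      funext (Gt_eq p q hq1 l)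
    rw [h]
    refine DifferentiableAt.fun_sum (fun x _ => ?_)
    exact (differentiableAt_const _).mul (differentiableAt_expZeta _ _ (Or.inl hs))
end

section
/- Let m, n, c be positive integers and p a prime. If p² divides c, p divides m, and p does not divide n, then Kl(m,n;c) = 0. -/
open Complex

lemma eC_add (x y : ℂ) : eC (x + y) = eC x * eC y := by
  unfold eC; rw [mul_add, Complex.exp_add]

lemma eC_int (k : ℤ) : eC (k : ℂ) = 1 := by
  unfold eC
  rw [show (2 * (Real.pi:ℂ) * Complex.I * (k:ℂ)) = (k : ℂ) * (2 * Real.pi * Complex.I) by ring]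
  exact Complex.exp_int_mul_two_pi_mul_I k

lemma eC_eq_of_sub_int (x y : ℂ) (k : ℤ) (h : x = y + k) : eC x = eC y := by
  rw [h, eC_add, eC_int, mul_one]

/-- An additive-character-like map on `ZMod c`. -/
noncomputable def chiC (c : ℕ) (a : ZMod c) : ℂ := eC ((a.val : ℝ) / c)

lemma chiC_intCast (c : ℕ) [NeZero c] (z : ℤ) :
    chiC c ((z : ZMod c)) = eC (((z : ℝ) / c : ℝ)) := by
  have hc : (0:ℝ) < c := by exact_mod_cast Nat.pos_of_ne_zero (NeZero.ne c)
  have hval : ((z : ZMod c).val : ℤ) = z % c := ZMod.val_intCast z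
  have hz : z = ((z : ZMod c).val : ℤ) + (z / c) * c := by
    rw [hval]; rw [Int.emod_def]; ring
  unfold chiC
  refine (eC_eq_of_sub_int _ _ (z / c) ?_).symm
  have hzR : (z : ℝ) = ((z : ZMod c).val : ℝ) + ((z / c : ℤ) : ℝ) * (c:ℝ) := by
    exact_mod_cast hz
  rw [show ((z:ℝ)/(c:ℝ)) = ((z : ZMod c).val : ℝ)/(c:ℝ) + ((z / c : ℤ) : ℝ) by
    rw [hzR, add_div, mul_div_cancel_right₀ _ hc.ne']]
  push_cast
  ring

lemma chiC_add (c : ℕ) [NeZero c] (a b : ZMod c) :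
    chiC c (a + b) = chiC c a * chiC c b := by
  have hc : (0:ℝ) < c := by exact_mod_cast Nat.pos_of_ne_zero (NeZero.ne c)
  have hadd : a.val + b.val = (a + b).val + ((a.val + b.val) / c) * c := by
    rw [ZMod.val_add]
    exact (Nat.mod_add_div' _ _).symm
  unfold chiC
  rw [← eC_add]
  refine (eC_eq_of_sub_int _ _ (((a.val + b.val) / c : ℕ) : ℤ) ?_).symm
  have hC : ((a.val : ℝ) : ℂ) + ((b.val : ℝ) : ℂ) = (((a+b).val : ℝ) : ℂ)
      + (((((a.val + b.val) / c : ℕ) : ℤ)) : ℂ) * (c:ℂ) := by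
    exact_mod_cast hadd
  have hc0 : (c : ℂ) ≠ 0 := by exact_mod_cast hc.ne'
  rw [← add_div, hC, add_div, mul_div_cancel_right₀ _ hc0]

lemma zmod_inv_eq_of_mul {c : ℕ} (a b : ZMod c) (ha : IsUnit a) (h : a * b = 1) :
    a⁻¹ = b := by
  have h1 := ZMod.inv_mul_of_unit a ha
  calc a⁻¹ = a⁻¹ * (a * b) := by rw [h, mul_one]
    _ = (a⁻¹ * a) * b := by ring
    _ = b := by rw [h1, one_mul]

theorem stmt11 (m n : ℤ) (c p : ℕ) (hm : 0 < m) (hn : 0 < n) (hc : 0 < c)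
    (hp : p.Prime) (hpc : p ^ 2 ∣ c) (hpm : (p : ℤ) ∣ m) (hpn : ¬ (p : ℤ) ∣ n) :
    Kl m n c = 0 := by
  haveI : NeZero c := ⟨hc.ne'⟩
  have hpc1 : p ∣ c := dvd_trans (dvd_pow_self p two_ne_zero) hpc
  have hp2 : 2 ≤ p := hp.two_le
  have hc1 : 1 < c := by
    have h4 : 4 ≤ p ^ 2 := by nlinarith
    have := Nat.le_of_dvd hc hpc
    omega
  haveI : Fact (1 < c) := ⟨hc1⟩
  set t : ZMod c := ((c / p : ℕ) : ZMod c) with ht_def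
  have hcp : p * (c / p) = c := Nat.mul_div_cancel' hpc1
  have ht2 : t * t = 0 := by
    have hdvd : c ∣ (c / p) * (c / p) := by
      obtain ⟨d, hd⟩ := hpc
      refine ⟨d, ?_⟩
      have h1 : c / p = p * d := by
        have h2 : c = p * (p * d) := by rw [hd]; ring
        rw [h2, Nat.mul_div_cancel_left _ hp.pos]
      rw [h1, hd]; ring
    rw [ht_def, ← Nat.cast_mul]
    exact (ZMod.natCast_eq_zero_iff _ _).mpr hdvd
  have hmt : (m : ZMod c) * t = 0 := by
    obtain ⟨m', hm'⟩ := hpm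
    have h1 : (m : ZMod c) * t = (m' : ZMod c) * ((p * (c / p) : ℕ) : ZMod c) := by
      rw [hm']; push_cast; ring
    rw [h1, hcp, ZMod.natCast_self, mul_zero]
  -- Step 1: rewrite Kl as a sum over units of ZMod c
  have step1 : Kl m n c = ∑ x ∈ Finset.univ.filter (fun x : ZMod c => IsUnit x),
      chiC c ((m : ZMod c) * x + (n : ZMod c) * x⁻¹) := by
    unfold Kl
    refine Finset.sum_nbij' (fun i => ((i : ZMod c))) (fun a => a.val) ?_ ?_ ?_ ?_ ?_
    · intro i hi
      simp only [Finset.mem_filter, Finset.mem_Icc] at hi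
      simp only [Finset.mem_filter, Finset.mem_univ, true_and]
      exact (ZMod.isUnit_iff_coprime i c).mpr hi.2
    · intro a ha
      simp only [Finset.mem_filter, Finset.mem_univ, true_and] at ha
      obtain ⟨u, hu⟩ := ha
      simp only [Finset.mem_filter, Finset.mem_Icc]
      have hco : Nat.Coprime a.val c := hu ▸ ZMod.val_coe_unit_coprime u
      have hlt : a.val < c := ZMod.val_lt a
      have hne : a.val ≠ 0 := by
        intro h0
        have ha0 : a = 0 := (ZMod.val_eq_zero a).mp h0
        rw [← hu] at ha0
        exact not_isUnit_zero (ha0 ▸ u.isUnit)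
      exact ⟨⟨Nat.one_le_iff_ne_zero.mpr hne, hlt.le⟩, hco⟩
    · intro i hi
      simp only [Finset.mem_filter, Finset.mem_Icc] at hi
      have hlt : i < c := by
        rcases Nat.lt_or_ge i c with h | h
        · exact h
        · exfalso
          have hic : i = c := le_antisymm hi.1.2 h
          rw [hic] at hi
          simp [Nat.gcd_self] at hi
          omega
      exact ZMod.val_natCast_of_lt hlt
    · intro a ha
      exact ZMod.natCast_rightInverse a
    · intro i hi
      have hinv : (((((i : ZMod c))⁻¹.val : ℕ)) : ZMod c) = ((i : ZMod c))⁻¹ :=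
        ZMod.natCast_rightInverse _
      have hcast : ((m * i + n * (((i : ZMod c))⁻¹.val : ℤ) : ℤ) : ZMod c)
          = (m : ZMod c) * (i : ZMod c) + (n : ZMod c) * ((i : ZMod c))⁻¹ := by
        push_cast [hinv]
        ring
      rw [← hcast, chiC_intCast]
  -- Step 2: invert
  have step2 : ∑ x ∈ Finset.univ.filter (fun x : ZMod c => IsUnit x),
      chiC c ((m : ZMod c) * x + (n : ZMod c) * x⁻¹)
      = ∑ x ∈ Finset.univ.filter (fun x : ZMod c => IsUnit x),
      chiC c ((m : ZMod c) * x⁻¹ + (n : ZMod c) * x) := by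
    refine Finset.sum_nbij' (fun a => a⁻¹) (fun a => a⁻¹) ?_ ?_ ?_ ?_ ?_
    · intro a ha
      simp only [Finset.mem_filter, Finset.mem_univ, true_and] at ha ⊢
      exact IsUnit.of_mul_eq_one _ (ZMod.inv_mul_of_unit a ha)
    · intro a ha
      simp only [Finset.mem_filter, Finset.mem_univ, true_and] at ha ⊢
      exact IsUnit.of_mul_eq_one _ (ZMod.inv_mul_of_unit a ha)
    · intro a ha
      simp only [Finset.mem_filter, Finset.mem_univ, true_and] at ha
      exact zmod_inv_eq_of_mul _ _ (IsUnit.of_mul_eq_one _ (ZMod.inv_mul_of_unit a ha))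
        (ZMod.inv_mul_of_unit a ha)
    · intro a ha
      simp only [Finset.mem_filter, Finset.mem_univ, true_and] at ha
      exact zmod_inv_eq_of_mul _ _ (IsUnit.of_mul_eq_one _ (ZMod.inv_mul_of_unit a ha))
        (ZMod.inv_mul_of_unit a ha)
    · intro a ha
      simp only [Finset.mem_filter, Finset.mem_univ, true_and] at ha
      have hinv : (a⁻¹)⁻¹ = a := zmod_inv_eq_of_mul _ _
        (IsUnit.of_mul_eq_one _ (ZMod.inv_mul_of_unit a ha)) (ZMod.inv_mul_of_unit a ha)
      rw [hinv]
  -- Step 3: shift by t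
  have step3 : ∀ x : ZMod c, IsUnit x →
      chiC c ((m : ZMod c) * (x + t)⁻¹ + (n : ZMod c) * (x + t))
      = chiC c ((n : ZMod c) * t) * chiC c ((m : ZMod c) * x⁻¹ + (n : ZMod c) * x) := by
    intro x hx
    have hx1 : x * x⁻¹ = 1 := ZMod.mul_inv_of_unit x hx
    have hxt : IsUnit (x + t) := by
      refine IsNilpotent.isUnit_add_left_of_commute ⟨2, ?_⟩ hx (Commute.all _ _)
      rw [pow_two]; exact ht2
    have hinv : (x + t)⁻¹ = x⁻¹ - x⁻¹ * x⁻¹ * t := by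
      refine zmod_inv_eq_of_mul _ _ hxt ?_
      linear_combination (1 - x⁻¹ * t) * hx1 - x⁻¹ * x⁻¹ * ht2
    have harg : (m : ZMod c) * (x + t)⁻¹ + (n : ZMod c) * (x + t)
        = (n : ZMod c) * t + ((m : ZMod c) * x⁻¹ + (n : ZMod c) * x) := by
      rw [hinv]
      linear_combination (-(x⁻¹ * x⁻¹)) * hmt
    rw [harg, chiC_add]
  have step4 : ∑ x ∈ Finset.univ.filter (fun x : ZMod c => IsUnit x),
      chiC c ((m : ZMod c) * x⁻¹ + (n : ZMod c) * x)
      = chiC c ((n : ZMod c) * t) * ∑ x ∈ Finset.univ.filter (fun x : ZMod c => IsUnit x),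
      chiC c ((m : ZMod c) * x⁻¹ + (n : ZMod c) * x) := by
    rw [Finset.mul_sum]
    have hunit_sub : ∀ a : ZMod c, IsUnit a → IsUnit (a - t) := by
      intro a ha
      have hh : a - t = a + (-t) := by ring
      rw [hh]
      refine IsNilpotent.isUnit_add_left_of_commute ⟨2, ?_⟩ ha (Commute.all _ _)
      rw [pow_two]; linear_combination ht2
    refine Finset.sum_nbij' (fun a => a - t) (fun a => a + t) ?_ ?_ ?_ ?_ ?_
    · intro a ha
      simp only [Finset.mem_filter, Finset.mem_univ, true_and] at ha ⊢
      exact hunit_sub a ha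
    · intro a ha
      simp only [Finset.mem_filter, Finset.mem_univ, true_and] at ha ⊢
      refine IsNilpotent.isUnit_add_left_of_commute ⟨2, ?_⟩ ha (Commute.all _ _)
      rw [pow_two]; exact ht2
    · intro a _; ring
    · intro a _; ring
    · intro a ha
      simp only [Finset.mem_filter, Finset.mem_univ, true_and] at ha
      have h3 := step3 (a - t) (hunit_sub a ha)
      rw [show a - t + t = a by ring] at h3
      exact h3
  -- Step 5: chiC c (n*t) ≠ 1
  have hnt : chiC c ((n : ZMod c) * t) ≠ 1 := by
    have hcast : ((n : ZMod c) * t) = (((n * (c / p : ℕ) : ℤ)) : ZMod c) := by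
      rw [Int.cast_mul, Int.cast_natCast, ht_def]
    rw [hcast, chiC_intCast]
    have hpR : (0:ℝ) < p := by exact_mod_cast hp.pos
    have hcR : (0:ℝ) < c := by exact_mod_cast hc
    have hcpR : (p:ℝ) * ((c / p : ℕ) : ℝ) = (c:ℝ) := by exact_mod_cast hcp
    have hfrac : ((n * (c / p : ℕ) : ℤ) : ℝ) / (c : ℝ) = (n : ℝ) / p := by
      rw [div_eq_div_iff hcR.ne' hpR.ne', Int.cast_mul, Int.cast_natCast]
      linear_combination ((n:ℤ):ℝ) * hcpR
    rw [hfrac]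
    intro h1
    unfold eC at h1
    rw [Complex.exp_eq_one_iff] at h1
    obtain ⟨k, hk⟩ := h1
    have h2πI : (2 * (Real.pi:ℂ) * Complex.I) ≠ 0 := by
      simp [Real.pi_ne_zero, Complex.I_ne_zero]
    have hk2 : ((((n:ℝ)/p : ℝ)) : ℂ) = (k : ℂ) := by
      apply mul_left_cancel₀ h2πI
      rw [hk]; ring
    have hk3 : (n : ℝ) / p = (k : ℝ) := by exact_mod_cast hk2
    apply hpn
    refine ⟨k, ?_⟩
    rw [div_eq_iff hpR.ne', mul_comm] at hk3
    exact_mod_cast hk3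
  -- conclude
  have hS : ∑ x ∈ Finset.univ.filter (fun x : ZMod c => IsUnit x),
      chiC c ((m : ZMod c) * x⁻¹ + (n : ZMod c) * x) = 0 := by
    have h0 : (chiC c ((n : ZMod c) * t) - 1) *
        (∑ x ∈ Finset.univ.filter (fun x : ZMod c => IsUnit x),
          chiC c ((m : ZMod c) * x⁻¹ + (n : ZMod c) * x)) = 0 := by
      linear_combination (-1 : ℂ) * step4
    rcases mul_eq_zero.mp h0 with h | h
    · exact absurd (by linear_combination h) hnt
    · exact h
  rw [step1, step2, hS]
end
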